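/- Let (G, u) be a lattice-ordered abelian group with order unit u and let n ∈ ℕ. The following are equivalent: (i) for any a, b ∈ [0, nu] there is a sharp element p ∈ [0, u] such that Ũ_p(a) ≤ Ũ_p(b) and Ũ_{p'}(a) ≥ Ũ_{p'}(b); (ii) for any a ∈ [−nu, nu] there is a sharp element p ∈ [0, u] such that Ũ_p(a) ≤ 0 and Ũ_{p'}(a) ≥ 0. -/

import Mathlib

section Aux
variable {G : Type*} [AddCommGroup G] [Lattice G] [CovariantClass G G (· + ·) (· ≤ ·)]

/-- Subadditivity of `a ⊓ ·` on nonnegative elements. -/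
lemma aux_inf_add_le (a b c : G) (ha : 0 ≤ a) (hb : 0 ≤ b) (hc : 0 ≤ c) :
    a ⊓ (b + c) ≤ a ⊓ b + a ⊓ c := by
  have h1 : a ⊓ (b + c) ≤ a ⊓ b + c := by
    rw [← sub_le_iff_le_add]
    refine le_inf ?_ ?_
    · exact le_trans (sub_le_sub_right inf_le_left c) (sub_le_self a hc)
    · calc a ⊓ (b + c) - c ≤ (b + c) - c := sub_le_sub_right inf_le_right c
        _ = b := add_sub_cancel_right b c
  have h2 : a ⊓ (b + c) ≤ a ⊓ b + a :=
    le_trans inf_le_left (le_add_of_nonneg_left (le_inf ha hb))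
  calc a ⊓ (b + c) ≤ (a ⊓ b + c) ⊓ (a ⊓ b + a) := le_inf h1 h2
    _ = a ⊓ b + (c ⊓ a) := (add_inf _ _ _).symm
    _ = a ⊓ b + a ⊓ c := by rw [inf_comm c a]

lemma aux_disj_add (a b c : G) (ha : 0 ≤ a) (hb : 0 ≤ b) (hc : 0 ≤ c)
    (hab : a ⊓ b = 0) (hac : a ⊓ c = 0) : a ⊓ (b + c) = 0 := by
  have h := aux_inf_add_le a b c ha hb hc
  rw [hab, hac, add_zero] at h
  exact le_antisymm h (le_inf ha (add_nonneg hb hc))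

lemma aux_disj_smul (a b : G) (ha : 0 ≤ a) (hb : 0 ≤ b) (hab : a ⊓ b = 0)
    (m k : ℕ) : (m • a) ⊓ (k • b) = 0 := by
  have key : ∀ j : ℕ, a ⊓ (j • b) = 0 := by
    intro j
    induction j with
    | zero => simpa using inf_eq_right.mpr ha
    | succ j ih =>
      rw [succ_nsmul]
      exact aux_disj_add a (j • b) b ha (nsmul_nonneg hb j) hb ih hab
  induction m with
  | zero => simpa using inf_eq_left.mpr (nsmul_nonneg hb k)
  | succ m ih =>
    rw [succ_nsmul, inf_comm]
    exact aux_disj_add (k • b) (m • a) a (nsmul_nonneg hb k) (nsmul_nonneg ha m) ha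
      (by rw [inf_comm]; exact ih) (by rw [inf_comm]; exact key k)

/-- Decomposition: if `c ⊓ d = 0` and `0 ≤ x ≤ c + d` then `x = x ⊓ c + x ⊓ d`. -/
lemma aux_decomp (c d x : G) (hc : 0 ≤ c) (hd : 0 ≤ d) (hcd : c ⊓ d = 0)
    (hx0 : 0 ≤ x) (hx : x ≤ c + d) : x ⊓ c + x ⊓ d = x := by
  have hinf : (x ⊓ c) ⊓ (x ⊓ d) = 0 := by
    rw [inf_inf_inf_comm, inf_idem, hcd]
    exact inf_eq_right.mpr hx0
  have hle : x ⊓ c + x ⊓ d ≤ x := by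
    rw [← inf_add_sup (x ⊓ c) (x ⊓ d), hinf, zero_add]
    exact sup_le inf_le_left inf_le_left
  have hge : x ≤ x ⊓ c + x ⊓ d := by
    have := aux_inf_add_le x c d hx0 hc hd
    rwa [inf_eq_left.mpr hx] at this
  exact le_antisymm hle hge

/-- If `C ⊓ D = 0`, `0 ≤ s ≤ C`, `0 ≤ t ≤ D`, then `(s + t) ⊓ C = s`. -/
lemma aux_proj (C D s t : G) (hC : 0 ≤ C) (hCD : C ⊓ D = 0)
    (hs0 : 0 ≤ s) (hsC : s ≤ C) (ht0 : 0 ≤ t) (htD : t ≤ D) :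
    (s + t) ⊓ C = s := by
  refine le_antisymm ?_ (le_inf (le_add_of_nonneg_right ht0) hsC)
  have h := aux_inf_add_le C s t hC hs0 ht0
  rw [inf_comm]
  calc C ⊓ (s + t) ≤ C ⊓ s + C ⊓ t := h
    _ ≤ s + 0 := add_le_add inf_le_right
        (by rw [← hCD]; exact inf_le_inf_left C htD)
    _ = s := add_zero s

/-- Additivity: if `c ⊓ d = 0`, `0 ≤ x, y ≤ c + d` then `(x+y) ⊓ (c+c) = x ⊓ c + y ⊓ c`. -/
lemma aux_add (c d x y : G) (hc : 0 ≤ c) (hd : 0 ≤ d) (hcd : c ⊓ d = 0)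
    (hx0 : 0 ≤ x) (hx : x ≤ c + d) (hy0 : 0 ≤ y) (hy : y ≤ c + d) :
    (x + y) ⊓ (c + c) = x ⊓ c + y ⊓ c := by
  have h2 : (c + c) ⊓ (d + d) = 0 := by
    have := aux_disj_smul c d hc hd hcd 2 2
    simpa [two_nsmul] using this
  have hsum : (x ⊓ c + y ⊓ c) + (x ⊓ d + y ⊓ d) = x + y := by
    have hx' := aux_decomp c d x hc hd hcd hx0 hx
    have hy' := aux_decomp c d y hc hd hcd hy0 hy
    rw [add_add_add_comm, hx', hy']
  have := aux_proj (c + c) (d + d) (x ⊓ c + y ⊓ c) (x ⊓ d + y ⊓ d)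
    (add_nonneg hc hc) h2
    (add_nonneg (le_inf hx0 hc) (le_inf hy0 hc))
    (add_le_add inf_le_right inf_le_right)
    (add_nonneg (le_inf hx0 hd) (le_inf hy0 hd))
    (add_le_add inf_le_right inf_le_right)
  rwa [hsum] at this

/-- Complement: if `c ⊓ d = 0` and `0 ≤ b ≤ c + d` then `(c + d - b) ⊓ c = c - b ⊓ c`. -/
lemma aux_compl (c d b : G) (hc : 0 ≤ c) (hd : 0 ≤ d) (hcd : c ⊓ d = 0)
    (hb0 : 0 ≤ b) (hb : b ≤ c + d) : (c + d - b) ⊓ c = c - b ⊓ c := by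
  have hdecomp := aux_decomp c d b hc hd hcd hb0 hb
  have hst : (c - b ⊓ c) + (d - b ⊓ d) = c + d - b := by
    rw [sub_add_sub_comm, hdecomp]
  have := aux_proj c d (c - b ⊓ c) (d - b ⊓ d) hc hcd
    (sub_nonneg.mpr inf_le_right) (sub_le_self c (le_inf hb0 hc))
    (sub_nonneg.mpr inf_le_right) (sub_le_self d (le_inf hb0 hd))
  rwa [hst] at this

end Aux

/-- in a lattice-ordered abelian group `(G,u)` with order unit `u`, for
`n ∈ ℕ` the following are equivalent:
(i) for `a, b ∈ [0, nu]` there is a sharp `p ∈ [0,u]` with `Ũ_p(a) ≤ Ũ_p(b)` and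
`Ũ_{p'}(a) ≥ Ũ_{p'}(b)` (for `0 ≤ x ≤ nu`, `Ũ_p(x) = x ⊓ n•p`);
(ii) for `a ∈ [−nu, nu]` there is a sharp `p` with `Ũ_p(a) ≤ 0 ≤ Ũ_{p'}(a)`
(for `−nu ≤ x ≤ nu`, `Ũ_p(x) = (x + nu) ⊓ 2n•p − n•p`). -/
theorem statement6 {G : Type*} [AddCommGroup G] [Lattice G]
    [CovariantClass G G (· + ·) (· ≤ ·)]
    (u : G) (hu : 0 ≤ u ∧ ∀ g : G, ∃ n : ℕ, g ≤ n • u) (n : ℕ) :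
    (∀ a b : G, 0 ≤ a → a ≤ n • u → 0 ≤ b → b ≤ n • u →
      ∃ p : G, (0 ≤ p ∧ p ≤ u ∧ p ⊓ (u - p) = 0) ∧
        a ⊓ n • p ≤ b ⊓ n • p ∧ b ⊓ n • (u - p) ≤ a ⊓ n • (u - p)) ↔
    (∀ a : G, -(n • u) ≤ a → a ≤ n • u →
      ∃ p : G, (0 ≤ p ∧ p ≤ u ∧ p ⊓ (u - p) = 0) ∧
        (a + n • u) ⊓ ((2 * n) • p) - n • p ≤ 0 ∧
        0 ≤ (a + n • u) ⊓ ((2 * n) • (u - p)) - n • (u - p)) := by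
  -- general setup depending on a sharp p
  have setup : ∀ p : G, 0 ≤ p → p ≤ u → p ⊓ (u - p) = 0 →
      (0 ≤ n • p ∧ 0 ≤ n • (u - p) ∧ (n • p) ⊓ (n • (u - p)) = 0 ∧
        n • p + n • (u - p) = n • u) := by
    intro p hp0 hpu hsharp
    have hq0 : (0:G) ≤ u - p := sub_nonneg.mpr hpu
    refine ⟨nsmul_nonneg hp0 n, nsmul_nonneg hq0 n, ?_, ?_⟩
    · exact aux_disj_smul p (u - p) hp0 hq0 hsharp n n
    · rw [← smul_add, add_sub_cancel]
  have two_smul_eq : ∀ x : G, (2 * n) • x = n • x + n • x := by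
    intro x; rw [two_mul, add_smul]
  constructor
  · -- (i) → (ii)
    intro H a han hau
    have hap0 : 0 ≤ a ⊔ 0 := le_sup_right
    have hapn : a ⊔ 0 ≤ n • u := sup_le hau (nsmul_nonneg (hu.1) n)
    have ham0 : 0 ≤ (-a) ⊔ 0 := le_sup_right
    have hamn : (-a) ⊔ 0 ≤ n • u := sup_le (neg_le.mp han) (nsmul_nonneg (hu.1) n)
    obtain ⟨p, ⟨hp0, hpu, hsharp⟩, h1, h2⟩ := H (a ⊔ 0) ((-a) ⊔ 0) hap0 hapn ham0 hamn
    obtain ⟨hc, hd, hcd, hsum⟩ := setup p hp0 hpu hsharp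
    refine ⟨p, ⟨hp0, hpu, hsharp⟩, ?_, ?_⟩
    all_goals
      set c : G := n • p with hcdef
      set d : G := n • (u - p) with hddef
    · -- (a + nu) ⊓ 2n•p ≤ n•p
      rw [two_smul_eq, sub_nonpos, ← hcdef]
      have key : a + n • u = (a ⊔ 0) + (n • u - ((-a) ⊔ 0)) := by
        have h : (a ⊔ 0) - ((-a) ⊔ 0) = a := by
          simpa [posPart_def, negPart_def] using posPart_sub_negPart a
        have h2 : (a ⊔ 0) + (n • u - ((-a) ⊔ 0)) = ((a ⊔ 0) - ((-a) ⊔ 0)) + n • u := by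
          abel
        rw [h2, h]
      rw [key, ← hsum]
      rw [aux_add c d (a ⊔ 0) (c + d - ((-a) ⊔ 0)) hc hd hcd hap0 (by rw [hsum]; exact hapn)
        (by rw [hsum]; exact sub_nonneg.mpr hamn)
        (sub_le_self _ ham0)]
      rw [aux_compl c d ((-a) ⊔ 0) hc hd hcd ham0 (by rw [hsum]; exact hamn)]
      calc (a ⊔ 0) ⊓ c + (c - ((-a) ⊔ 0) ⊓ c) ≤ ((-a) ⊔ 0) ⊓ c + (c - ((-a) ⊔ 0) ⊓ c) :=
            add_le_add h1 le_rfl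
        _ = c := by abel
    · -- n•(u-p) ≤ (a + nu) ⊓ 2n•(u-p)
      rw [two_smul_eq, sub_nonneg, ← hddef]
      have key : a + n • u = (a ⊔ 0) + (n • u - ((-a) ⊔ 0)) := by
        have h : (a ⊔ 0) - ((-a) ⊔ 0) = a := by
          simpa [posPart_def, negPart_def] using posPart_sub_negPart a
        have h2 : (a ⊔ 0) + (n • u - ((-a) ⊔ 0)) = ((a ⊔ 0) - ((-a) ⊔ 0)) + n • u := by
          abel
        rw [h2, h]
      have hcd' : d ⊓ c = 0 := by rw [inf_comm]; exact hcd
      have hsum' : d + c = n • u := by rw [add_comm]; exact hsum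
      rw [key, ← hsum']
      rw [aux_add d c (a ⊔ 0) (d + c - ((-a) ⊔ 0)) hd hc hcd' hap0 (by rw [hsum']; exact hapn)
        (by rw [hsum']; exact sub_nonneg.mpr hamn)
        (sub_le_self _ ham0)]
      rw [aux_compl d c ((-a) ⊔ 0) hd hc hcd' ham0 (by rw [hsum']; exact hamn)]
      calc d = ((-a) ⊔ 0) ⊓ d + (d - ((-a) ⊔ 0) ⊓ d) := by abel
        _ ≤ (a ⊔ 0) ⊓ d + (d - ((-a) ⊔ 0) ⊓ d) := add_le_add h2 le_rfl
  · -- (ii) → (i)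
    intro H a b ha0 han hb0 hbn
    have hab1 : -(n • u) ≤ a - b := by
      rw [neg_le, neg_sub]; exact le_trans (sub_le_self b ha0) hbn
    have hab2 : a - b ≤ n • u := le_trans (sub_le_self a hb0) han
    obtain ⟨p, ⟨hp0, hpu, hsharp⟩, h1, h2⟩ := H (a - b) hab1 hab2
    obtain ⟨hc, hd, hcd, hsum⟩ := setup p hp0 hpu hsharp
    refine ⟨p, ⟨hp0, hpu, hsharp⟩, ?_, ?_⟩
    all_goals
      set c : G := n • p with hcdef
      set d : G := n • (u - p) with hddef
    · rw [two_smul_eq, sub_nonpos, ← hcdef] at h1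
      have key : a - b + n • u = a + (n • u - b) := by abel
      rw [key, ← hsum] at h1
      rw [aux_add c d a (c + d - b) hc hd hcd ha0 (by rw [hsum]; exact han)
        (by rw [hsum]; exact sub_nonneg.mpr hbn) (sub_le_self _ hb0)] at h1
      rw [aux_compl c d b hc hd hcd hb0 (by rw [hsum]; exact hbn)] at h1
      have : a ⊓ c + (c - b ⊓ c) ≤ b ⊓ c + (c - b ⊓ c) := by
        refine le_trans h1 ?_
        have : b ⊓ c + (c - b ⊓ c) = c := by abel
        rw [this]
      exact le_of_add_le_add_right this
    · rw [two_smul_eq, sub_nonneg, ← hddef] at h2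
      have key : a - b + n • u = a + (n • u - b) := by abel
      have hcd' : d ⊓ c = 0 := by rw [inf_comm]; exact hcd
      have hsum' : d + c = n • u := by rw [add_comm]; exact hsum
      rw [key, ← hsum'] at h2
      rw [aux_add d c a (d + c - b) hd hc hcd' ha0 (by rw [hsum']; exact han)
        (by rw [hsum']; exact sub_nonneg.mpr hbn) (sub_le_self _ hb0)] at h2
      rw [aux_compl d c b hd hc hcd' hb0 (by rw [hsum']; exact hbn)] at h2
      have : b ⊓ d + (d - b ⊓ d) ≤ a ⊓ d + (d - b ⊓ d) := by
        refine le_trans ?_ h2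
        have : b ⊓ d + (d - b ⊓ d) = d := by abel
        rw [this]
      exact le_of_add_le_add_right this
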